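/- Let (p_{i,j})_{1 ≤ i ≤ j ≤ n} be any family of primitive elements of H_R, let C be a vector space with basis (e_0,...,e_n), and define Δ_C(e_0) = 1 ⊗ e_0 and Δ_C(e_i) = Σ_{j=0}^{i−1} (Σ_{decompositions I_{i_1,j_1}...I_{i_k,j_k} of {j+1,...,i}} p_{i_k,j_k} ⊤ ... ⊤ p_{i_1,j_1}) ⊗ e_j + 1 ⊗ e_i. Then (C, Δ_C) is a left H_R-comodule. -/

import Mathlib

open scoped TensorProduct

section

variable {H : Type*} [CommRing H] [Bialgebra ℚ H]

/-- `segAux t q n a = q (a+n) ⊤ ... ⊤ q a`, the iterated natural growth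
(left-nested) for a bilinear operation `t`. -/
def segAux (t : H →ₗ[ℚ] H →ₗ[ℚ] H) (q : ℕ → H) : ℕ → ℕ → H
  | 0, a => q a
  | n + 1, a => t (segAux t q n (a + 1)) (q a)

/-- `seg t q a b = q_b ⊤ ... ⊤ q_a` for `a ≤ b`. -/
def seg (t : H →ₗ[ℚ] H →ₗ[ℚ] H) (q : ℕ → H) (a b : ℕ) : H :=
  segAux t q (b - a) a

/-- The term `p_{i_k,j_k} ⊤ ... ⊤ p_{i_1,j_1}` attached to the decomposition of the
interval `{a, ..., b}` determined by the (sorted) list of cut points: a cut point `c`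
separates `{..., c}` from `{c+1, ...}`. -/
def blockTerm (t : H →ₗ[ℚ] H →ₗ[ℚ] H) (p : ℕ → ℕ → H) : ℕ → ℕ → List ℕ → H
  | a, b, [] => p a b
  | a, b, c :: rest => t (blockTerm t p (c + 1) b rest) (p a c)

/-- The reduced coproduct `Δ̃(x) = Δ(x) − 1 ⊗ x − x ⊗ 1`. -/
noncomputable def rcomul (x : H) : H ⊗[ℚ] H :=
  Coalgebra.comul x - 1 ⊗ₜ[ℚ] x - x ⊗ₜ[ℚ] 1

/-- block family attached to `(a, L, b)` -/
def Qf (p : ℕ → ℕ → H) : ℕ → List ℕ → ℕ → ℕ → H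
  | a, [], b, _ => p a b
  | a, c :: L, b, k => if k ≤ 1 then p a c else Qf p (c + 1) L b (k - 1)

variable {t : H →ₗ[ℚ] H →ₗ[ℚ] H} {p : ℕ → ℕ → H}

lemma segAux_congr {q q' : ℕ → H} (h : ∀ k, a ≤ k → k ≤ a + n → q k = q' k) :
    segAux t q n a = segAux t q' n a := by
  induction n generalizing a with
  | zero => simpa [segAux] using h a le_rfl (by omega)
  | succ m ih =>
    simp only [segAux]
    rw [ih (fun k hk hk2 => h k (by omega) (by omega)), h a le_rfl (by omega)]

lemma segAux_shift {q : ℕ → H} (n a : ℕ) :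
    segAux t (fun k => q (k + 1)) n a = segAux t q n (a + 1) := by
  induction n generalizing a with
  | zero => rfl
  | succ m ih => simp only [segAux, ih]

lemma Qf_succ_succ (a c : ℕ) (L : List ℕ) (b k : ℕ) :
    Qf p a (c :: L) b (k + 2) = Qf p (c + 1) L b (k + 1) := by
  simp [Qf]

lemma seg_Qf_shift {a c b : ℕ} {L : List ℕ} {j m : ℕ} (hj : 1 ≤ j) :
    seg t (Qf p a (c :: L) b) (j + 1) (m + 1) = seg t (Qf p (c + 1) L b) j m := by
  unfold seg
  have h : m + 1 - (j + 1) = m - j := by omega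
  rw [h, ← segAux_shift (q := Qf p a (c :: L) b) (m - j) j]
  exact segAux_congr fun k hk hk2 => by
    obtain ⟨k', rfl⟩ : ∃ k', k = k' + 1 := ⟨k - 1, by omega⟩
    exact Qf_succ_succ a c L b k'

lemma blockTerm_eq_seg (L : List ℕ) (a b : ℕ) :
    blockTerm t p a b L = seg t (Qf p a L b) 1 (L.length + 1) := by
  induction L generalizing a with
  | nil => simp [blockTerm, seg, segAux, Qf]
  | cons c L ih =>
    show t _ _ = seg t (Qf p a (c :: L) b) 1 (L.length + 1 + 1)
    unfold seg segAux
    simp only [Nat.add_sub_cancel]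
    show t _ _ = t (segAux t (Qf p a (c::L) b) L.length 2) (Qf p a (c::L) b 1)
    have h2 : segAux t (Qf p a (c::L) b) L.length 2 = seg t (Qf p (c+1) L b) 1 (L.length + 1) := by
      have := seg_Qf_shift (t := t) (p := p) (a := a) (c := c) (b := b) (L := L)
        (j := 1) (m := L.length + 1) le_rfl
      unfold seg at this
      simpa [seg] using this
    rw [h2, ih (c + 1)]
    simp [Qf]
end
section
variable {H : Type*} [CommRing H] [Bialgebra ℚ H]
variable {t : H →ₗ[ℚ] H →ₗ[ℚ] H} {p : ℕ → ℕ → H}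

lemma seg_Qf_left (L : List ℕ) (a b j : ℕ) (hj : j < L.length) :
    seg t (Qf p a L b) 1 (j + 1) = blockTerm t p a (L.getD j 0) (L.take j) := by
  induction L generalizing a j with
  | nil => simp at hj
  | cons c L ih =>
    cases j with
    | zero => simp [seg, segAux, Qf, blockTerm]
    | succ k =>
      show seg t (Qf p a (c :: L) b) 1 (k + 2) = _
      unfold seg segAux
      show t (segAux t (Qf p a (c::L) b) k 2) (Qf p a (c::L) b 1) = _
      have h2 : segAux t (Qf p a (c::L) b) k 2 = seg t (Qf p (c+1) L b) 1 (k + 1) := by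
        have := seg_Qf_shift (t := t) (p := p) (a := a) (c := c) (b := b) (L := L)
          (j := 1) (m := k + 1) le_rfl
        unfold seg at this
        simpa [seg] using this
      rw [h2, ih (c + 1) k (by simpa using hj)]
      simp [Qf, blockTerm]

lemma seg_Qf_right (L : List ℕ) (a b j : ℕ) (hj : j < L.length) :
    seg t (Qf p a L b) (j + 2) (L.length + 1)
      = blockTerm t p (L.getD j 0 + 1) b (L.drop (j + 1)) := by
  induction L generalizing a j with
  | nil => simp at hj
  | cons c L ih =>
    cases j with
    | zero =>
      show seg t (Qf p a (c :: L) b) 2 (L.length + 1 + 1) = _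
      rw [seg_Qf_shift le_rfl, ← blockTerm_eq_seg]
      simp
    | succ k =>
      show seg t (Qf p a (c :: L) b) (k + 2 + 1) (L.length + 1 + 1) = _
      rw [seg_Qf_shift (by omega), ih (c + 1) k (by simpa using hj)]
      simp

lemma Qf_primitive {n : ℕ}
    (hp : ∀ i j, 1 ≤ i → i ≤ j → j ≤ n →
      (Coalgebra.comul (p i j) : H ⊗[ℚ] H) = p i j ⊗ₜ[ℚ] 1 + 1 ⊗ₜ[ℚ] p i j)
    (L : List ℕ) (a b : ℕ) (ha : 1 ≤ a) (hab : a ≤ b) (hb : b ≤ n)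
    (hsort : L.Pairwise (· < ·)) (hmem : ∀ c ∈ L, a ≤ c ∧ c < b) :
    ∀ k, 1 ≤ k → k ≤ L.length + 1 →
      (Coalgebra.comul (Qf p a L b k) : H ⊗[ℚ] H)
        = Qf p a L b k ⊗ₜ[ℚ] 1 + 1 ⊗ₜ[ℚ] Qf p a L b k := by
  induction L generalizing a with
  | nil => intro k _ _; exact hp a b ha hab hb
  | cons c L ih =>
    intro k hk1 hk2
    obtain ⟨hac, hcb⟩ := hmem c (by simp)
    rcases Nat.lt_or_ge k 2 with hk | hk
    · interval_cases k
      simpa [Qf] using hp a c ha hac (by omega)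
    · obtain ⟨k', rfl⟩ : ∃ k', k = k' + 2 := ⟨k - 2, by omega⟩
      rw [Qf_succ_succ]
      exact ih (c + 1) (by omega) (by omega) hsort.of_cons
        (fun d hd => ⟨(List.rel_of_pairwise_cons hsort hd), (hmem d (by simp [hd])).2⟩)
        (k' + 1) (by omega) (by simpa using hk2)
end
section
variable {H : Type*} [CommRing H] [Bialgebra ℚ H]
variable {t : H →ₗ[ℚ] H →ₗ[ℚ] H} {p : ℕ → ℕ → H}

lemma comul_blockTerm {n : ℕ}
    (hgrowth : ∀ (q : ℕ → H) (m : ℕ), 1 ≤ m →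
      (∀ k, 1 ≤ k → k ≤ m →
        (Coalgebra.comul (q k) : H ⊗[ℚ] H) = q k ⊗ₜ[ℚ] 1 + 1 ⊗ₜ[ℚ] q k) →
      rcomul (seg t q 1 m)
        = ∑ j ∈ Finset.Icc 1 (m - 1), seg t q (j + 1) m ⊗ₜ[ℚ] seg t q 1 j)
    (hp : ∀ i j, 1 ≤ i → i ≤ j → j ≤ n →
      (Coalgebra.comul (p i j) : H ⊗[ℚ] H) = p i j ⊗ₜ[ℚ] 1 + 1 ⊗ₜ[ℚ] p i j)
    (L : List ℕ) (a b : ℕ) (ha : 1 ≤ a) (hab : a ≤ b) (hb : b ≤ n)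
    (hsort : L.Pairwise (· < ·)) (hmem : ∀ c ∈ L, a ≤ c ∧ c < b) :
    (Coalgebra.comul (blockTerm t p a b L) : H ⊗[ℚ] H)
      = blockTerm t p a b L ⊗ₜ[ℚ] 1 + 1 ⊗ₜ[ℚ] blockTerm t p a b L
        + ∑ j ∈ Finset.range L.length,
            blockTerm t p (L.getD j 0 + 1) b (L.drop (j + 1))
              ⊗ₜ[ℚ] blockTerm t p a (L.getD j 0) (L.take j) := by
  have hg := hgrowth (Qf p a L b) (L.length + 1) (by omega)
    (Qf_primitive hp L a b ha hab hb hsort hmem)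
  have hc : (Coalgebra.comul (seg t (Qf p a L b) 1 (L.length + 1)) : H ⊗[ℚ] H)
      = seg t (Qf p a L b) 1 (L.length + 1) ⊗ₜ[ℚ] 1
        + 1 ⊗ₜ[ℚ] seg t (Qf p a L b) 1 (L.length + 1)
        + rcomul (seg t (Qf p a L b) 1 (L.length + 1)) := by
    unfold rcomul; abel
  rw [blockTerm_eq_seg, hc, hg]
  congr 1
  rw [Nat.add_sub_cancel]
  refine Finset.sum_nbij' (i := fun j => j - 1) (j := fun j => j + 1) ?_ ?_ ?_ ?_ ?_ <;>
    intro j hj <;> simp only [Finset.mem_Icc, Finset.mem_range] at *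
  · omega
  · omega
  · omega
  · omega
  · obtain ⟨j', rfl⟩ : ∃ j', j = j' + 1 := ⟨j - 1, by omega⟩
    simp only [Nat.add_sub_cancel]
    rw [show j' + 1 + 1 = j' + 2 from rfl, seg_Qf_right L a b j' (by omega),
      seg_Qf_left L a b j' (by omega)]
end

lemma sorted_lt_eq_of_mem_iff : ∀ {l1 l2 : List ℕ}, l1.Pairwise (· < ·) → l2.Pairwise (· < ·) →
    (∀ x, x ∈ l1 ↔ x ∈ l2) → l1 = l2 := by
  intro l1
  induction l1 with
  | nil =>
    intro l2 _ _ h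
    cases l2 with
    | nil => rfl
    | cons b l2 => exact absurd ((h b).2 (by simp)) (by simp)
  | cons a l1 ih =>
    intro l2 h1 h2 h
    cases l2 with
    | nil => exact absurd ((h a).1 (by simp)) (by simp)
    | cons b l2 =>
      have hab : a = b := by
        have ha : a ∈ b :: l2 := (h a).1 (by simp)
        have hb : b ∈ a :: l1 := (h b).2 (by simp)
        rcases List.mem_cons.mp ha with h' | h'
        · exact h'
        · rcases List.mem_cons.mp hb with h'' | h''
          · exact h''.symm
          · exact absurd (lt_trans (List.rel_of_pairwise_cons h1 h'')
              (List.rel_of_pairwise_cons h2 h')) (lt_irrefl a)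
      subst hab
      congr 1
      refine ih h1.of_cons h2.of_cons fun x => ⟨fun hx => ?_, fun hx => ?_⟩
      · rcases List.mem_cons.mp ((h x).1 (by simp [hx])) with h' | h'
        · exact absurd (h' ▸ List.rel_of_pairwise_cons h1 hx) (lt_irrefl _)
        · exact h'
      · rcases List.mem_cons.mp ((h x).2 (by simp [hx])) with h' | h'
        · exact absurd (h' ▸ List.rel_of_pairwise_cons h2 hx) (lt_irrefl _)
        · exact h'

lemma mem_take_sorted {l : List ℕ} (hs : l.Pairwise (· < ·)) {j : ℕ} (hj : j < l.length) (x : ℕ) :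
    x ∈ l.take j ↔ x ∈ l ∧ x < l.getD j 0 := by
  rw [List.getD_eq_getElem (l := l) (d := 0) hj]
  constructor
  · intro hx
    rcases List.mem_take_iff_getElem.mp hx with ⟨i, hi, rfl⟩
    have hi' : i < j := by omega
    exact ⟨List.getElem_mem _, List.pairwise_iff_getElem.mp hs i j _ hj hi'⟩
  · rintro ⟨hx, hlt⟩
    rcases List.mem_iff_getElem.mp hx with ⟨i, hi, rfl⟩
    have : i < j := by
      by_contra hij
      rcases Nat.lt_or_ge j i with h' | h'
      · exact absurd (lt_trans hlt (List.pairwise_iff_getElem.mp hs j i hj hi h')) (lt_irrefl _)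
      · have : i = j := by omega
        subst this; exact absurd hlt (lt_irrefl _)
    exact List.mem_take_iff_getElem.mpr ⟨i, by omega, rfl⟩

lemma mem_drop_sorted {l : List ℕ} (hs : l.Pairwise (· < ·)) {j : ℕ} (hj : j < l.length) (x : ℕ) :
    x ∈ l.drop (j + 1) ↔ x ∈ l ∧ l.getD j 0 < x := by
  rw [List.getD_eq_getElem (l := l) (d := 0) hj]
  constructor
  · intro hx
    rcases List.mem_drop_iff_getElem.mp hx with ⟨i, hi, rfl⟩
    exact ⟨List.getElem_mem _, List.pairwise_iff_getElem.mp hs j (j+1+i) hj _ (by omega)⟩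
  · rintro ⟨hx, hlt⟩
    rcases List.mem_iff_getElem.mp hx with ⟨i, hi, rfl⟩
    have hij : j < i := by
      by_contra hij
      rcases Nat.lt_or_ge i j with h' | h'
      · exact absurd (lt_trans hlt (List.pairwise_iff_getElem.mp hs i j hi hj h')) (lt_irrefl _)
      · have : i = j := by omega
        subst this; exact absurd hlt (lt_irrefl _)
    exact List.mem_drop_iff_getElem.mpr ⟨i - (j+1), by omega, by congr 1; omega⟩

lemma take_sort_eq (S : Finset ℕ) {j : ℕ} (hj : j < (S.sort (· ≤ ·)).length) :
    (S.sort (· ≤ ·)).take j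
      = (S.filter (· < (S.sort (· ≤ ·)).getD j 0)).sort (· ≤ ·) := by
  refine sorted_lt_eq_of_mem_iff
    ((Finset.sortedLT_sort S).pairwise.sublist (List.take_sublist _ _))
    (Finset.sortedLT_sort _).pairwise fun x => ?_
  rw [mem_take_sorted (Finset.sortedLT_sort S).pairwise hj]
  simp only [Finset.mem_sort, Finset.mem_filter]

lemma drop_sort_eq (S : Finset ℕ) {j : ℕ} (hj : j < (S.sort (· ≤ ·)).length) :
    (S.sort (· ≤ ·)).drop (j + 1)
      = (S.filter ((S.sort (· ≤ ·)).getD j 0 < ·)).sort (· ≤ ·) := by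
  refine sorted_lt_eq_of_mem_iff
    ((Finset.sortedLT_sort S).pairwise.sublist (List.drop_sublist _ _))
    (Finset.sortedLT_sort _).pairwise fun x => ?_
  rw [mem_drop_sorted (Finset.sortedLT_sort S).pairwise hj]
  simp only [Finset.mem_sort, Finset.mem_filter]

lemma sum_range_sort {M : Type*} [AddCommMonoid M] (S : Finset ℕ)
    (F : ℕ → List ℕ → List ℕ → M) :
    ∑ j ∈ Finset.range (S.sort (· ≤ ·)).length,
        F ((S.sort (· ≤ ·)).getD j 0) ((S.sort (· ≤ ·)).take j) ((S.sort (· ≤ ·)).drop (j + 1))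
      = ∑ c ∈ S, F c ((S.filter (· < c)).sort (· ≤ ·)) ((S.filter (c < ·)).sort (· ≤ ·)) := by
  set l := S.sort (· ≤ ·) with hl
  refine Finset.sum_nbij' (i := fun j => l.getD j 0) (j := fun c => l.idxOf c)
    ?_ ?_ ?_ ?_ ?_
  · intro j hj
    simp only [Finset.mem_range] at hj
    rw [← Finset.mem_sort (α := ℕ) (· ≤ ·), ← hl, List.getD_eq_getElem (l := l) (d := 0) hj]
    exact List.getElem_mem _
  · intro c hc
    simp only [Finset.mem_range]
    exact List.idxOf_lt_length_iff.mpr ((Finset.mem_sort (· ≤ ·)).mpr hc)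
  · intro j hj
    simp only [Finset.mem_range] at hj
    rw [List.getD_eq_getElem (l := l) (d := 0) hj]
    exact (Finset.sort_nodup _ _).idxOf_getElem _ _
  · intro c hc
    have h1 : c ∈ l := (Finset.mem_sort (· ≤ ·)).mpr hc
    rw [List.getD_eq_getElem (l := l) (d := 0) (List.idxOf_lt_length_iff.mpr h1)]
    exact List.getElem_idxOf (List.idxOf_lt_length_iff.mpr h1)
  · intro j hj
    simp only [Finset.mem_range] at hj
    rw [take_sort_eq S hj, drop_sort_eq S hj]
section
variable {H : Type*} [CommRing H] [Bialgebra ℚ H]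
variable (t : H →ₗ[ℚ] H →ₗ[ℚ] H) (p : ℕ → ℕ → H)

noncomputable def Dsum (a b : ℕ) : H :=
  ∑ S ∈ (Finset.Ico a b).powerset, blockTerm t p a b (S.sort (· ≤ ·))

variable {t p}

lemma comul_Dsum {n : ℕ}
    (hgrowth : ∀ (q : ℕ → H) (m : ℕ), 1 ≤ m →
      (∀ k, 1 ≤ k → k ≤ m →
        (Coalgebra.comul (q k) : H ⊗[ℚ] H) = q k ⊗ₜ[ℚ] 1 + 1 ⊗ₜ[ℚ] q k) →
      rcomul (seg t q 1 m)
        = ∑ j ∈ Finset.Icc 1 (m - 1), seg t q (j + 1) m ⊗ₜ[ℚ] seg t q 1 j)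
    (hp : ∀ i j, 1 ≤ i → i ≤ j → j ≤ n →
      (Coalgebra.comul (p i j) : H ⊗[ℚ] H) = p i j ⊗ₜ[ℚ] 1 + 1 ⊗ₜ[ℚ] p i j)
    (a b : ℕ) (ha : 1 ≤ a) (hab : a ≤ b) (hb : b ≤ n) :
    (Coalgebra.comul (Dsum t p a b) : H ⊗[ℚ] H)
      = Dsum t p a b ⊗ₜ[ℚ] 1 + 1 ⊗ₜ[ℚ] Dsum t p a b
        + ∑ c ∈ Finset.Ico a b, Dsum t p (c + 1) b ⊗ₜ[ℚ] Dsum t p a c := by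
  unfold Dsum
  rw [map_sum]
  have step1 : ∀ S ∈ (Finset.Ico a b).powerset,
      (Coalgebra.comul (blockTerm t p a b (S.sort (· ≤ ·))) : H ⊗[ℚ] H)
        = blockTerm t p a b (S.sort (· ≤ ·)) ⊗ₜ[ℚ] 1
          + 1 ⊗ₜ[ℚ] blockTerm t p a b (S.sort (· ≤ ·))
          + ∑ c ∈ S, blockTerm t p (c + 1) b ((S.filter (c < ·)).sort (· ≤ ·))
              ⊗ₜ[ℚ] blockTerm t p a c ((S.filter (· < c)).sort (· ≤ ·)) := by
    intro S hS
    rw [Finset.mem_powerset] at hS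
    rw [comul_blockTerm hgrowth hp _ a b ha hab hb (Finset.sortedLT_sort S).pairwise
      (fun c hc => by
        have := hS ((Finset.mem_sort (· ≤ ·)).mp hc)
        simp only [Finset.mem_Ico] at this
        exact this)]
    congr 1
    exact sum_range_sort S (fun c l1 l2 =>
      blockTerm t p (c + 1) b l2 ⊗ₜ[ℚ] blockTerm t p a c l1)
  rw [Finset.sum_congr rfl step1]
  simp only [Finset.sum_add_distrib]
  rw [← TensorProduct.sum_tmul, ← TensorProduct.tmul_sum]
  congr 1
  -- swap the double sum
  have step2 : ∀ S ∈ (Finset.Ico a b).powerset,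
      (∑ c ∈ S, blockTerm t p (c + 1) b ((S.filter (c < ·)).sort (· ≤ ·))
          ⊗ₜ[ℚ] blockTerm t p a c ((S.filter (· < c)).sort (· ≤ ·)))
        = ∑ c ∈ Finset.Ico a b, if c ∈ S then
            blockTerm t p (c + 1) b ((S.filter (c < ·)).sort (· ≤ ·))
              ⊗ₜ[ℚ] blockTerm t p a c ((S.filter (· < c)).sort (· ≤ ·)) else 0 := by
    intro S hS
    rw [Finset.mem_powerset] at hS
    rw [Finset.sum_ite_mem, Finset.inter_eq_right.mpr hS]
  rw [Finset.sum_congr rfl step2, Finset.sum_comm]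
  apply Finset.sum_congr rfl
  intro c hc
  simp only [Finset.mem_Ico] at hc
  rw [← Finset.sum_filter]
  have key : ∑ S ∈ (Finset.Ico a b).powerset.filter (fun S => c ∈ S),
      blockTerm t p (c + 1) b ((S.filter (c < ·)).sort (· ≤ ·))
        ⊗ₜ[ℚ] blockTerm t p a c ((S.filter (· < c)).sort (· ≤ ·))
      = ∑ P ∈ (Finset.Ico a c).powerset ×ˢ (Finset.Ico (c + 1) b).powerset,
          blockTerm t p (c + 1) b (P.2.sort (· ≤ ·))
            ⊗ₜ[ℚ] blockTerm t p a c (P.1.sort (· ≤ ·)) := by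
    refine Finset.sum_nbij' (i := fun S => (S.filter (· < c), S.filter (c < ·)))
      (j := fun P => P.1 ∪ insert c P.2) ?_ ?_ ?_ ?_ ?_
    · intro S hS
      simp only [Finset.mem_filter, Finset.mem_powerset] at hS
      simp only [Finset.mem_product, Finset.mem_powerset]
      constructor
      · intro x hx
        simp only [Finset.mem_filter] at hx
        have := hS.1 hx.1
        simp only [Finset.mem_Ico] at *
        omega
      · intro x hx
        simp only [Finset.mem_filter] at hx
        have := hS.1 hx.1
        simp only [Finset.mem_Ico] at *
        omega
    · intro P hP
      simp only [Finset.mem_product, Finset.mem_powerset] at hP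
      simp only [Finset.mem_filter, Finset.mem_powerset]
      refine ⟨fun x hx => ?_, by simp⟩
      simp only [Finset.mem_union, Finset.mem_insert] at hx
      rcases hx with h | h | h
      · have := hP.1 h; simp only [Finset.mem_Ico] at *; omega
      · subst h; simp only [Finset.mem_Ico]; omega
      · have := hP.2 h; simp only [Finset.mem_Ico] at *; omega
    · intro S hS
      simp only [Finset.mem_filter, Finset.mem_powerset] at hS
      dsimp only
      ext x
      simp only [Finset.mem_union, Finset.mem_insert, Finset.mem_filter]
      constructor
      · rintro (⟨h, _⟩ | h | ⟨h, _⟩)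
        · exact h
        · exact h ▸ hS.2
        · exact h
      · intro hx
        rcases lt_trichotomy x c with h | h | h
        · exact Or.inl ⟨hx, h⟩
        · exact Or.inr (Or.inl h)
        · exact Or.inr (Or.inr ⟨hx, h⟩)
    · intro P hP
      simp only [Finset.mem_product, Finset.mem_powerset] at hP
      have h1 : ∀ x ∈ P.1, x < c := fun x hx => by
        have := hP.1 hx; simp only [Finset.mem_Ico] at this; omega
      have h2 : ∀ x ∈ P.2, c < x := fun x hx => by
        have := hP.2 hx; simp only [Finset.mem_Ico] at this; omega
      have e1 : (P.1 ∪ insert c P.2).filter (· < c) = P.1 := by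
        ext x
        simp only [Finset.mem_filter, Finset.mem_union, Finset.mem_insert]
        constructor
        · rintro ⟨h | h | h, hlt⟩
          · exact h
          · omega
          · exact absurd hlt (by have := h2 x h; omega)
        · intro hx; exact ⟨Or.inl hx, h1 x hx⟩
      have e2 : (P.1 ∪ insert c P.2).filter (c < ·) = P.2 := by
        ext x
        simp only [Finset.mem_filter, Finset.mem_union, Finset.mem_insert]
        constructor
        · rintro ⟨h | h | h, hlt⟩
          · exact absurd hlt (by have := h1 x h; omega)
          · omega
          · exact h
        · intro hx; exact ⟨Or.inr (Or.inr hx), h2 x hx⟩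
      rw [e1, e2]
    · intro S hS
      rfl
  rw [key, Finset.sum_product]
  simp only [← TensorProduct.sum_tmul, ← TensorProduct.tmul_sum]

lemma counit_Dsum {n : ℕ}
    (hgrowth : ∀ (q : ℕ → H) (m : ℕ), 1 ≤ m →
      (∀ k, 1 ≤ k → k ≤ m →
        (Coalgebra.comul (q k) : H ⊗[ℚ] H) = q k ⊗ₜ[ℚ] 1 + 1 ⊗ₜ[ℚ] q k) →
      rcomul (seg t q 1 m)
        = ∑ j ∈ Finset.Icc 1 (m - 1), seg t q (j + 1) m ⊗ₜ[ℚ] seg t q 1 j)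
    (hp : ∀ i j, 1 ≤ i → i ≤ j → j ≤ n →
      (Coalgebra.comul (p i j) : H ⊗[ℚ] H) = p i j ⊗ₜ[ℚ] 1 + 1 ⊗ₜ[ℚ] p i j)
    (a : ℕ) (ha : 1 ≤ a) : ∀ b, a ≤ b → b ≤ n →
      Coalgebra.counit (R := ℚ) (Dsum t p a b) = 0 := by
  intro b
  induction b using Nat.strong_induction_on with
  | _ b ih =>
    intro hab hb
    have hax := Coalgebra.lTensor_counit_comul (R := ℚ) (Dsum t p a b)
    rw [comul_Dsum hgrowth hp a b ha hab hb] at hax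
    simp only [map_add, map_sum, LinearMap.lTensor_tmul] at hax
    rw [Bialgebra.counit_one] at hax
    have hsum : ∑ c ∈ Finset.Ico a b,
        Dsum t p (c + 1) b ⊗ₜ[ℚ] (Coalgebra.counit (R := ℚ) (Dsum t p a c)) = 0 := by
      apply Finset.sum_eq_zero
      intro c hc
      simp only [Finset.mem_Ico] at hc
      rw [ih c hc.2 hc.1 (by omega)]
      exact TensorProduct.tmul_zero _ _
    rw [hsum, add_zero] at hax
    have h0 : (1 : H) ⊗ₜ[ℚ] (Coalgebra.counit (R := ℚ) (Dsum t p a b)) = 0 :=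
      add_eq_left.mp hax
    have h1 : (Coalgebra.counit (R := ℚ) (Dsum t p a b)) • (1 : H) = 0 := by
      have h2 := congrArg (TensorProduct.rid ℚ H).toLinearMap h0
      rw [map_zero] at h2
      rw [LinearEquiv.coe_coe] at h2
      rw [TensorProduct.rid_tmul] at h2
      exact h2
    rcases subsingleton_or_nontrivial H with hH | hH
    · calc Coalgebra.counit (R := ℚ) (Dsum t p a b)
          = Coalgebra.counit (R := ℚ) (0 : H) := by rw [Subsingleton.elim (Dsum t p a b) 0]
        _ = 0 := map_zero _
    · have := h1
      rw [← Algebra.algebraMap_eq_smul_one] at this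
      exact RingHom.injective (algebraMap ℚ H) (by rw [map_zero]; exact this)
end
section
variable {H : Type*} [CommRing H] [Bialgebra ℚ H]


set_option maxHeartbeats 1000000
set_option synthInstance.maxHeartbeats 400000

/-- Given a family `(p_{i,j})_{1 ≤ i ≤ j ≤ n}` of primitive elements of the Hopf
algebra of rooted trees `H` and its natural growth operation `⊤ = t` (satisfying the
iterated-coproduct formula for primitives), the linear map `Δ_C` on the vector space
`C` with basis `(e_0, ..., e_n)` defined by `Δ_C(e_0) = 1 ⊗ e_0` and
`Δ_C(e_i) = Σ_{j<i} (Σ_{decompositions of {j+1,...,i}} p_{i_k,j_k} ⊤ ... ⊤ p_{i_1,j_1})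
⊗ e_j + 1 ⊗ e_i` makes `C` a left `H`-comodule. -/
theorem comodule_from_primitive_family
    (t : H →ₗ[ℚ] H →ₗ[ℚ] H)
    -- the iterated natural-growth coproduct formula for primitive elements
    (hgrowth : ∀ (q : ℕ → H) (m : ℕ), 1 ≤ m →
      (∀ k, 1 ≤ k → k ≤ m →
        (Coalgebra.comul (q k) : H ⊗[ℚ] H) = q k ⊗ₜ[ℚ] 1 + 1 ⊗ₜ[ℚ] q k) →
      rcomul (seg t q 1 m)
        = ∑ j ∈ Finset.Icc 1 (m - 1), seg t q (j + 1) m ⊗ₜ[ℚ] seg t q 1 j)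
    (n : ℕ) (hn : 1 ≤ n)
    (p : ℕ → ℕ → H)
    (hp : ∀ i j, 1 ≤ i → i ≤ j → j ≤ n →
      (Coalgebra.comul (p i j) : H ⊗[ℚ] H) = p i j ⊗ₜ[ℚ] 1 + 1 ⊗ₜ[ℚ] p i j)
    (ρ : (Fin (n + 1) → ℚ) →ₗ[ℚ] H ⊗[ℚ] (Fin (n + 1) → ℚ))
    (hρ : ρ = (Pi.basisFun ℚ (Fin (n + 1))).constr ℚ (fun i : Fin (n + 1) =>
      (∑ j ∈ Finset.Iio i,
        (∑ S ∈ (Finset.Ico ((j : ℕ) + 1) (i : ℕ)).powerset,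
          blockTerm t p ((j : ℕ) + 1) (i : ℕ) (S.sort (· ≤ ·)))
          ⊗ₜ[ℚ] (Pi.basisFun ℚ (Fin (n + 1))) j)
        + 1 ⊗ₜ[ℚ] (Pi.basisFun ℚ (Fin (n + 1))) i)) :
    (∀ x : Fin (n + 1) → ℚ,
      (TensorProduct.assoc ℚ H H (Fin (n + 1) → ℚ))
          ((LinearMap.rTensor (Fin (n + 1) → ℚ) (Coalgebra.comul (R := ℚ))) (ρ x))
        = (LinearMap.lTensor H ρ) (ρ x)) ∧
    (∀ x : Fin (n + 1) → ℚ,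
      (TensorProduct.lid ℚ (Fin (n + 1) → ℚ))
          ((LinearMap.rTensor (Fin (n + 1) → ℚ) (Coalgebra.counit (R := ℚ))) (ρ x))
        = x) := by
  set B := Pi.basisFun ℚ (Fin (n + 1)) with hB
  have hρi : ∀ i : Fin (n + 1), ρ (B i)
      = ∑ j ∈ Finset.Iio i, Dsum t p ((j : ℕ) + 1) (i : ℕ) ⊗ₜ[ℚ] B j + 1 ⊗ₜ[ℚ] B i := by
    intro i
    rw [hρ, Module.Basis.constr_basis]
    rfl
  have hDi : ∀ (i j : Fin (n + 1)), j < i →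
      (Coalgebra.comul (Dsum t p ((j : ℕ) + 1) (i : ℕ)) : H ⊗[ℚ] H)
        = Dsum t p ((j : ℕ) + 1) (i : ℕ) ⊗ₜ[ℚ] 1 + 1 ⊗ₜ[ℚ] Dsum t p ((j : ℕ) + 1) (i : ℕ)
          + ∑ c ∈ Finset.Ico ((j : ℕ) + 1) (i : ℕ),
              Dsum t p (c + 1) (i : ℕ) ⊗ₜ[ℚ] Dsum t p ((j : ℕ) + 1) c := by
    intro i j hj
    exact comul_Dsum hgrowth hp _ _ (by omega) (by exact_mod_cast hj) (by omega)
  have hεD : ∀ (i j : Fin (n + 1)), j < i →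
      Coalgebra.counit (R := ℚ) (Dsum t p ((j : ℕ) + 1) (i : ℕ)) = 0 := by
    intro i j hj
    exact counit_Dsum hgrowth hp _ (by omega) _ (by exact_mod_cast hj) (by omega)
  constructor
  · -- coassociativity
    suffices h : (TensorProduct.assoc ℚ H H (Fin (n + 1) → ℚ)).toLinearMap
        ∘ₗ (LinearMap.rTensor (Fin (n + 1) → ℚ) (Coalgebra.comul (R := ℚ))) ∘ₗ ρ
        = (LinearMap.lTensor H ρ) ∘ₗ ρ by
      intro x
      exact LinearMap.congr_fun h x
    apply B.ext
    intro i
    simp only [LinearMap.comp_apply, LinearEquiv.coe_coe]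
    have hL : (TensorProduct.assoc ℚ H H (Fin (n + 1) → ℚ))
        ((LinearMap.rTensor (Fin (n + 1) → ℚ) (Coalgebra.comul (R := ℚ))) (ρ (B i)))
        = ((∑ j ∈ Finset.Iio i, Dsum t p ((j : ℕ) + 1) (i : ℕ) ⊗ₜ[ℚ] ((1 : H) ⊗ₜ[ℚ] B j))
          + (∑ j ∈ Finset.Iio i, (1 : H) ⊗ₜ[ℚ] (Dsum t p ((j : ℕ) + 1) (i : ℕ) ⊗ₜ[ℚ] B j))
          + (∑ j ∈ Finset.Iio i, ∑ c ∈ Finset.Ico ((j : ℕ) + 1) (i : ℕ),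
              Dsum t p (c + 1) (i : ℕ) ⊗ₜ[ℚ] (Dsum t p ((j : ℕ) + 1) c ⊗ₜ[ℚ] B j)))
          + (1 : H) ⊗ₜ[ℚ] ((1 : H) ⊗ₜ[ℚ] B i) := by
      rw [hρi i, map_add, map_sum, map_add, map_sum]
      simp only [LinearMap.rTensor_tmul, Bialgebra.comul_one]
      have hterm : ∀ j ∈ Finset.Iio i,
          (TensorProduct.assoc ℚ H H (Fin (n + 1) → ℚ))
            ((Coalgebra.comul (R := ℚ) (Dsum t p ((j : ℕ) + 1) (i : ℕ))) ⊗ₜ[ℚ] B j)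
          = Dsum t p ((j : ℕ) + 1) (i : ℕ) ⊗ₜ[ℚ] ((1 : H) ⊗ₜ[ℚ] B j)
            + (1 : H) ⊗ₜ[ℚ] (Dsum t p ((j : ℕ) + 1) (i : ℕ) ⊗ₜ[ℚ] B j)
            + ∑ c ∈ Finset.Ico ((j : ℕ) + 1) (i : ℕ),
                Dsum t p (c + 1) (i : ℕ) ⊗ₜ[ℚ] (Dsum t p ((j : ℕ) + 1) c ⊗ₜ[ℚ] B j) := by
        intro j hj
        rw [hDi i j (Finset.mem_Iio.mp hj)]
        simp only [TensorProduct.add_tmul, TensorProduct.sum_tmul, map_add, map_sum,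
          TensorProduct.assoc_tmul]
      rw [Finset.sum_congr rfl hterm, Finset.sum_add_distrib, Finset.sum_add_distrib,
        Algebra.TensorProduct.one_def, TensorProduct.assoc_tmul]
    have hR : (LinearMap.lTensor H ρ) (ρ (B i))
        = ((∑ j ∈ Finset.Iio i, Dsum t p ((j : ℕ) + 1) (i : ℕ) ⊗ₜ[ℚ] ((1 : H) ⊗ₜ[ℚ] B j))
          + (∑ j ∈ Finset.Iio i, (1 : H) ⊗ₜ[ℚ] (Dsum t p ((j : ℕ) + 1) (i : ℕ) ⊗ₜ[ℚ] B j))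
          + (∑ j ∈ Finset.Iio i, ∑ k ∈ Finset.Iio j,
              Dsum t p ((j : ℕ) + 1) (i : ℕ) ⊗ₜ[ℚ] (Dsum t p ((k : ℕ) + 1) (j : ℕ) ⊗ₜ[ℚ] B k)))
          + (1 : H) ⊗ₜ[ℚ] ((1 : H) ⊗ₜ[ℚ] B i) := by
      rw [hρi i, map_add, map_sum]
      simp only [LinearMap.lTensor_tmul]
      have hterm : ∀ j ∈ Finset.Iio i,
          Dsum t p ((j : ℕ) + 1) (i : ℕ) ⊗ₜ[ℚ] (ρ (B j))
          = (∑ k ∈ Finset.Iio j,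
              Dsum t p ((j : ℕ) + 1) (i : ℕ) ⊗ₜ[ℚ] (Dsum t p ((k : ℕ) + 1) (j : ℕ) ⊗ₜ[ℚ] B k))
            + Dsum t p ((j : ℕ) + 1) (i : ℕ) ⊗ₜ[ℚ] ((1 : H) ⊗ₜ[ℚ] B j) := by
        intro j hj
        rw [hρi j, TensorProduct.tmul_add, TensorProduct.tmul_sum]
      rw [Finset.sum_congr rfl hterm, Finset.sum_add_distrib, hρi i,
        TensorProduct.tmul_add, TensorProduct.tmul_sum]
      abel
    rw [hL, hR]
    have hkey : (∑ j ∈ Finset.Iio i, ∑ c ∈ Finset.Ico ((j : ℕ) + 1) (i : ℕ),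
              Dsum t p (c + 1) (i : ℕ) ⊗ₜ[ℚ] (Dsum t p ((j : ℕ) + 1) c ⊗ₜ[ℚ] B j))
        = ∑ j ∈ Finset.Iio i, ∑ k ∈ Finset.Iio j,
              Dsum t p ((j : ℕ) + 1) (i : ℕ) ⊗ₜ[ℚ] (Dsum t p ((k : ℕ) + 1) (j : ℕ) ⊗ₜ[ℚ] B k) := by
      rw [Finset.sum_sigma', Finset.sum_sigma']
      open Fin.NatCast in
      refine Finset.sum_nbij' (i := fun x => ⟨((x.2 : ℕ) : Fin (n + 1)), x.1⟩)
        (j := fun y => ⟨y.2, (y.1 : ℕ)⟩) ?_ ?_ ?_ ?_ ?_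
      · rintro ⟨j, c⟩ hx
        simp only [Finset.mem_sigma, Finset.mem_Iio, Finset.mem_Ico] at hx ⊢
        have hi : (i : ℕ) ≤ n := by omega
        have hc : c < n + 1 := by omega
        constructor
        · rw [Fin.lt_def, Fin.val_natCast, Nat.mod_eq_of_lt hc]
          omega
        · rw [Fin.lt_def, Fin.val_natCast, Nat.mod_eq_of_lt hc]
          omega
      · rintro ⟨j, k⟩ hy
        simp only [Finset.mem_sigma, Finset.mem_Iio, Finset.mem_Ico] at hy ⊢
        obtain ⟨h1, h2⟩ := hy
        have h1' := Fin.lt_def.mp h1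
        have h2' := Fin.lt_def.mp h2
        exact ⟨lt_trans h2 h1, by omega, by omega⟩
      · rintro ⟨j, c⟩ hx
        simp only [Finset.mem_sigma, Finset.mem_Iio, Finset.mem_Ico] at hx
        have hc : c < n + 1 := by omega
        simp only [Fin.val_natCast, Nat.mod_eq_of_lt hc]
      · rintro ⟨j, k⟩ hy
        simp only [Finset.mem_sigma, Finset.mem_Iio] at hy
        simp only [Fin.cast_val_eq_self]
      · rintro ⟨j, c⟩ hx
        simp only [Finset.mem_sigma, Finset.mem_Iio, Finset.mem_Ico] at hx
        have hc : c < n + 1 := by omega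
        simp only [Fin.val_natCast, Nat.mod_eq_of_lt hc]
    rw [hkey]
  · -- counit
    suffices h : (TensorProduct.lid ℚ (Fin (n + 1) → ℚ)).toLinearMap
        ∘ₗ (LinearMap.rTensor (Fin (n + 1) → ℚ) (Coalgebra.counit (R := ℚ))) ∘ₗ ρ
        = LinearMap.id by
      intro x
      exact LinearMap.congr_fun h x
    apply B.ext
    intro i
    simp only [LinearMap.comp_apply, LinearEquiv.coe_coe, LinearMap.id_apply]
    rw [hρi i]
    simp only [map_add, map_sum, LinearMap.rTensor_tmul, Bialgebra.counit_one]
    rw [Finset.sum_congr rfl (fun j hj => by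
      rw [hεD i j (Finset.mem_Iio.mp hj), TensorProduct.zero_tmul, map_zero])]
    simp [TensorProduct.lid_tmul]

end
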